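/- Let a = (a1, a2, a3, a4) with a1 = a3, a2 = a4 (symmetric case) and Δa = a2 - a1 > 0. Then for any positive integer m, det M_m(a,c) = m⁶(c-a1)(c-a2)·Q(c) where Q(c) = m²c² - m²(a1+a2)c + m²a1a2 - 2(a2-a1). In particular, the set of c with det M_m(a,c) = 0 is exactly {a1, a2, c⁻_m(a1,a2), c⁺_m(a1,a2)} where c±_m(a1,a2) = (a1+a2)/2 ± (1/2)√((a2-a1)² + 8Δa/m²), and these four values are pairwise distinct. -/

import Mathlib

theorem stmt_10 (a1 a2 : ℝ) (hpos : 0 < a2 - a1) (m : ℕ) (hm : 0 < m) :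
    let Δa : ℝ := a2 - a1
    let Mdet : ℝ → ℝ := fun c => Matrix.det
      !![(m : ℝ)^2 * (a1 - c) - 1, 1, 1, -1;
         -1, (m : ℝ)^2 * (a2 - c) + 1, 1, -1;
         1, -1, (m : ℝ)^2 * (a1 - c) - 1, 1;
         1, -1, -1, (m : ℝ)^2 * (a2 - c) + 1]
    let Q : ℝ → ℝ := fun c =>
      (m : ℝ)^2 * c^2 - (m : ℝ)^2 * (a1 + a2) * c + (m : ℝ)^2 * a1 * a2 - 2 * (a2 - a1)
    let cplus : ℝ := (a1 + a2) / 2 + Real.sqrt ((a2 - a1)^2 + 8 * Δa / (m : ℝ)^2) / 2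
    let cminus : ℝ := (a1 + a2) / 2 - Real.sqrt ((a2 - a1)^2 + 8 * Δa / (m : ℝ)^2) / 2
    (∀ c : ℝ, Mdet c = (m : ℝ)^6 * (c - a1) * (c - a2) * Q c) ∧
    {c : ℝ | Mdet c = 0} = {a1, a2, cminus, cplus} ∧
    (a1 ≠ a2 ∧ a1 ≠ cminus ∧ a1 ≠ cplus ∧ a2 ≠ cminus ∧ a2 ≠ cplus ∧ cminus ≠ cplus) := by
  intro Δa Mdet Q cplus cminus
  have hm0 : (m : ℝ) ≠ 0 := Nat.cast_ne_zero.mpr hm.ne'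
  have hm2 : (0:ℝ) < (m:ℝ)^2 := by positivity
  set D : ℝ := (a2 - a1)^2 + 8 * Δa / (m : ℝ)^2 with hD
  have hDpos : 0 < D := by
    have h8 : 0 < 8 * Δa / (m:ℝ)^2 := by positivity
    rw [hD]
    nlinarith [sq_nonneg (a2 - a1)]
  set s : ℝ := Real.sqrt D with hs
  have hs2 : s ^ 2 = D := Real.sq_sqrt hDpos.le
  have hspos : 0 < s := Real.sqrt_pos.mpr hDpos
  -- factor Q
  have hQfac : ∀ c : ℝ, Q c = (m:ℝ)^2 * (c - cminus) * (c - cplus) := by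
    intro c
    show _ = (m:ℝ)^2 * (c - ((a1+a2)/2 - s/2)) * (c - ((a1+a2)/2 + s/2))
    have hD' : (m:ℝ)^2 * D = (m:ℝ)^2 * (a2-a1)^2 + 8 * (a2 - a1) := by
      rw [hD]; field_simp [Δa]; ring
    have : (m:ℝ)^2 * s^2 = (m:ℝ)^2 * (a2-a1)^2 + 8 * (a2 - a1) := by rw [hs2, hD']
    simp only [Q]; nlinarith [this]
  have hdet : ∀ c : ℝ, Mdet c = (m : ℝ)^6 * (c - a1) * (c - a2) * Q c := by
    intro c
    show Matrix.det _ = _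
    simp only [Q]
    simp [Matrix.det_succ_row_zero, Fin.sum_univ_succ, Fin.succAbove, Fin.castSucc, Fin.castAdd, Fin.castLE]
    ring
  refine ⟨hdet, ?_, ?_⟩
  · ext c
    simp only [Set.mem_setOf_eq, Set.mem_insert_iff, Set.mem_singleton_iff, hdet c, hQfac c]
    constructor
    · intro h
      have h6 : ((m:ℝ)^6) ≠ 0 := by positivity
      have h2' : ((m:ℝ)^2) ≠ 0 := by positivity
      simp only [mul_eq_zero, h6, h2', false_or, sub_eq_zero] at h
      tauto
    · rintro (rfl | rfl | rfl | rfl) <;> ring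
  · have hQa1 : Q a1 = -2 * (a2 - a1) := by simp only [Q]; ring
    have hQa2 : Q a2 = -2 * (a2 - a1) := by simp only [Q]; ring
    have hQne : ∀ c, Q c = -2 * (a2-a1) → c ≠ cminus ∧ c ≠ cplus := by
      intro c hc
      constructor <;> intro h <;> rw [hQfac c, h] at hc
      · have : cminus < cplus := by
          show (a1+a2)/2 - s/2 < (a1+a2)/2 + s/2; linarith
        simp at hc
        nlinarith
      · simp at hc; nlinarith
    refine ⟨by linarith, (hQne a1 hQa1).1, (hQne a1 hQa1).2, (hQne a2 hQa2).1,
      (hQne a2 hQa2).2, ?_⟩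
    show (a1+a2)/2 - s/2 ≠ (a1+a2)/2 + s/2
    intro h; linarith
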